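/- For every integer d ≥ 0, any 2d+3 points in ℝ^d can be partitioned into three pairwise disjoint sets A₁, A₂, A₃ such that the convex hulls of A₁, A₂, A₃ have a common point. -/

import Mathlib

open Metric Set Finset Module
open scoped RealInnerProductSpace

variable {E : Type} [NormedAddCommGroup E] [InnerProductSpace ℝ E] [FiniteDimensional ℝ E]

/-- Colorful Carathéodory for `n > finrank` color classes of size 3. -/
theorem colorful_caratheodory {n : ℕ} (hn : finrank ℝ E < n)
    (f : Fin n → Fin 3 → E) (hf : ∀ i, (0 : E) ∈ convexHull ℝ (Set.range (f i))) :
    ∃ c : Fin n → Fin 3, (0 : E) ∈ convexHull ℝ (Set.range fun i => f i (c i)) := by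
  classical
  have hnpos : 0 < n := lt_of_le_of_lt (Nat.zero_le _) hn
  haveI : NeZero n := ⟨hnpos.ne'⟩
  obtain ⟨c, -, hc⟩ := Finset.exists_min_image Finset.univ
    (fun c : Fin n → Fin 3 => infDist 0 (convexHull ℝ (Set.range fun i => f i (c i))))
    Finset.univ_nonempty
  set g : Fin n → E := fun i => f i (c i) with hg
  have hKcpt : IsCompact (convexHull ℝ (Set.range g)) :=
    (Set.finite_range g).isCompact_convexHull ℝ
  have hKne : (convexHull ℝ (Set.range g)).Nonempty :=
    ⟨g 0, subset_convexHull ℝ _ ⟨0, rfl⟩⟩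
  obtain ⟨x, hxK, hxdist⟩ := hKcpt.exists_infDist_eq_dist hKne 0
  by_cases hx0 : x = 0
  · exact ⟨c, hx0 ▸ hxK⟩
  exfalso
  -- variational inequality
  have hvar : ∀ v ∈ convexHull ℝ (Set.range g), ‖x‖ ^ 2 ≤ ⟪x, v⟫ := by
    have h1 : ‖(0 : E) - x‖ = ⨅ w : convexHull ℝ (Set.range g), ‖(0 : E) - w‖ := by
      rw [infDist_eq_iInf] at hxdist
      simp only [dist_eq_norm] at hxdist
      exact hxdist.symm
    have h2 := (norm_eq_iInf_iff_real_inner_le_zero (convex_convexHull ℝ _) hxK).1 h1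
    intro v hv
    have h3 := h2 v hv
    rw [zero_sub, inner_sub_right, inner_neg_left, inner_neg_left,
      real_inner_self_eq_norm_sq] at h3
    linarith
  obtain ⟨κ, hκfin, z, w, hzr, hai, hwpos, hwsum, hzwx⟩ :=
    eq_pos_convex_span_of_mem_convexHull hxK
  haveI : Nonempty κ := by
    rcases isEmpty_or_nonempty κ with h | h
    · simp at hwsum
    · exact h
  -- indices
  have hzg : ∀ k, ∃ i, g i = z k := fun k => hzr ⟨k, rfl⟩
  choose idx hidx using hzg
  -- all z k lie on the hyperplane ⟪x, ⬝⟫ = ‖x‖^2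
  have hge : ∀ k, ‖x‖ ^ 2 ≤ ⟪x, z k⟫ := fun k =>
    hvar _ (subset_convexHull ℝ _ (hzr ⟨k, rfl⟩))
  have hsum : ∑ k, w k * ⟪x, z k⟫ = ‖x‖ ^ 2 := by
    have h : ⟪x, ∑ k, w k • z k⟫ = ‖x‖ ^ 2 := by
      rw [hzwx, real_inner_self_eq_norm_sq]
    rw [inner_sum] at h
    simpa only [real_inner_smul_right] using h
  have hplane : ∀ k, ⟪x, z k⟫ = ‖x‖ ^ 2 := by
    intro k₀
    by_contra hne
    have hlt : ∑ k, w k * ‖x‖ ^ 2 < ∑ k, w k * ⟪x, z k⟫ := by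
      refine Finset.sum_lt_sum (fun k _ => mul_le_mul_of_nonneg_left (hge k) (hwpos k).le)
        ⟨k₀, Finset.mem_univ _, mul_lt_mul_of_pos_left (lt_of_le_of_ne (hge k₀) (Ne.symm hne)) (hwpos k₀)⟩
    rw [← Finset.sum_mul, hwsum, one_mul, hsum] at hlt
    exact lt_irrefl _ hlt
  -- cardinality bound
  have hinj : Function.Injective idx := fun a b h => hai.injective (by rw [← hidx a, ← hidx b, h])
  have hcard : Fintype.card κ ≤ finrank ℝ E := by
    have hspan : vectorSpan ℝ (Set.range z) ≤ (ℝ ∙ x)ᗮ := by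
      rw [vectorSpan_def]
      refine Submodule.span_le.2 ?_
      rintro v ⟨a, ⟨k1, rfl⟩, b, ⟨k2, rfl⟩, rfl⟩
      refine (Submodule.mem_orthogonal' _ _).2 ?_
      intro u hu
      obtain ⟨s, rfl⟩ := Submodule.mem_span_singleton.1 hu
      simp only [vsub_eq_sub]
      have e1 : inner ℝ (z k1) x = (‖x‖ ^ 2 : ℝ) := by rw [real_inner_comm]; exact hplane k1
      have e2 : inner ℝ (z k2) x = (‖x‖ ^ 2 : ℝ) := by rw [real_inner_comm]; exact hplane k2
      rw [real_inner_smul_right, inner_sub_left, e1, e2]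
      ring
    have h1 : finrank ℝ (ℝ ∙ x) = 1 := finrank_span_singleton hx0
    have h2 := Submodule.finrank_add_finrank_orthogonal (K := ℝ ∙ x)
    have h3 : finrank ℝ (vectorSpan ℝ (Set.range z)) ≤ finrank ℝ ((ℝ ∙ x)ᗮ : Submodule ℝ E) :=
      Submodule.finrank_mono hspan
    have hkpos : 0 < Fintype.card κ := Fintype.card_pos
    have h4 : finrank ℝ (vectorSpan ℝ (Set.range z)) = Fintype.card κ - 1 :=
      hai.finrank_vectorSpan (by omega)
    omega
  obtain ⟨j, hj⟩ : ∃ j : Fin n, ∀ k, idx k ≠ j := by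
    by_contra h
    push_neg at h
    have hsurj : Function.Surjective idx := fun j => h j
    have := Fintype.card_le_of_surjective idx hsurj
    rw [Fintype.card_fin] at this
    omega
  -- a point of class j on the other side
  obtain ⟨r, hr⟩ : ∃ r, ⟪x, f j r⟫ ≤ 0 := by
    by_contra h
    push_neg at h
    have hcvx : Convex ℝ {v : E | 0 < ⟪x, v⟫} :=
      convex_halfSpace_gt ⟨fun a b => inner_add_right x a b, fun t v => real_inner_smul_right x v t⟩ 0
    have h0 : (0 : E) ∈ {v : E | 0 < ⟪x, v⟫} :=
      convexHull_min (by rintro v ⟨s, rfl⟩; exact h s) hcvx (hf j)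
    simp at h0
  set c' : Fin n → Fin 3 := Function.update c j r with hc'
  set g' : Fin n → E := fun i => f i (c' i) with hg'
  have hxK' : x ∈ convexHull ℝ (Set.range g') := by
    rw [← hzwx]
    have hmem : ∀ k, z k ∈ Set.range g' := by
      intro k
      refine ⟨idx k, ?_⟩
      have : c' (idx k) = c (idx k) := Function.update_of_ne (hj k) _ _
      rw [hg']
      simp only [this]
      exact hidx k
    have h := Finset.univ.centerMass_mem_convexHull (w := w) (z := z)
      (fun k _ => (hwpos k).le) (by rw [hwsum]; norm_num) (fun k _ => hmem k)
    rwa [Finset.centerMass_eq_of_sum_1 _ _ hwsum] at h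
  have hyK' : f j r ∈ convexHull ℝ (Set.range g') := by
    refine subset_convexHull ℝ _ ⟨j, ?_⟩
    rw [hg']
    simp [hc']
  -- move slightly towards f j r
  set y := f j r
  set a := ‖x‖ ^ 2 with hadef
  set b := ‖y‖ ^ 2 with hbdef
  have ha : 0 < a := by
    have : 0 < ‖x‖ := norm_pos_iff.2 hx0
    positivity
  have hb : 0 ≤ b := sq_nonneg _
  have hab : 0 < a + b := by linarith
  set t := a / (a + b) with htdef
  have ht0 : 0 < t := div_pos ha hab
  have ht1 : t ≤ 1 := (div_le_one hab).2 (by linarith)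
  set zt := (1 - t) • x + t • y with hzt
  have hztK : zt ∈ convexHull ℝ (Set.range g') :=
    (convex_convexHull ℝ _) hxK' hyK' (by linarith) ht0.le (by ring)
  have hexp : ‖zt‖ ^ 2 = (1 - t) ^ 2 * a + 2 * ((1 - t) * t) * ⟪x, y⟫ + t ^ 2 * b := by
    rw [hzt, norm_add_sq_real, norm_smul, norm_smul, real_inner_smul_left,
      real_inner_smul_right, Real.norm_eq_abs, Real.norm_eq_abs,
      abs_of_nonneg (by linarith : (0:ℝ) ≤ 1 - t), abs_of_nonneg ht0.le]
    rw [hadef, hbdef]; ring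
  have hlt : ‖zt‖ ^ 2 < a := by
    have h1 : ‖zt‖ ^ 2 ≤ (1 - t) ^ 2 * a + t ^ 2 * b := by
      have : 2 * ((1 - t) * t) * ⟪x, y⟫ ≤ 0 := by
        apply mul_nonpos_of_nonneg_of_nonpos
        · nlinarith
        · exact hr
      linarith [hexp]
    have h2 : (1 - t) ^ 2 * a + t ^ 2 * b < a := by
      have h1t : 1 - t = b / (a + b) := by rw [htdef]; field_simp; ring
      rw [h1t, htdef, div_pow, div_pow, div_mul_eq_mul_div, div_mul_eq_mul_div,
        ← add_div, div_lt_iff₀ (by positivity)]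
      nlinarith [mul_pos (mul_pos ha ha) hab]
    linarith
  have h1 : infDist 0 (convexHull ℝ (Set.range g')) ≤ ‖zt‖ := by
    have := infDist_le_dist_of_mem (x := (0 : E)) hztK
    rwa [dist_zero_left] at this
  have h2 : infDist 0 (convexHull ℝ (Set.range g)) = ‖x‖ := by
    rw [hxdist, dist_zero_left]
  have h3 : ‖zt‖ < ‖x‖ := by
    by_contra hcon
    push_neg at hcon
    have hsq := pow_le_pow_left₀ (norm_nonneg x) hcon 2
    rw [hadef] at hlt
    linarith
  have hfinal : infDist 0 (convexHull ℝ (Set.range g)) ≤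
      infDist 0 (convexHull ℝ (Set.range g')) := hc c' (Finset.mem_univ _)
  linarith

/-- Extract weights indexed by `Fin n` from membership in the convex hull of a range. -/
theorem exists_weights {V : Type*} [AddCommGroup V] [Module ℝ V] {n : ℕ}
    (g : Fin n → V) {v : V} (hv : v ∈ convexHull ℝ (Set.range g)) :
    ∃ lam : Fin n → ℝ, (∀ i, 0 ≤ lam i) ∧ ∑ i, lam i = 1 ∧ ∑ i, lam i • g i = v := by
  classical
  obtain ⟨κ, hκ, z, w, hzr, -, hwpos, hwsum, hzw⟩ := eq_pos_convex_span_of_mem_convexHull hv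
  choose idx hidx using fun k => hzr (Set.mem_range_self k)
  refine ⟨fun i => ∑ k ∈ Finset.univ.filter (fun k => idx k = i), w k, ?_, ?_, ?_⟩
  · intro i; exact Finset.sum_nonneg fun k _ => (hwpos k).le
  · rw [Finset.sum_fiberwise]; exact hwsum
  · calc ∑ i, (∑ k ∈ Finset.univ.filter (fun k => idx k = i), w k) • g i
        = ∑ i, ∑ k ∈ Finset.univ.filter (fun k => idx k = i), w k • z k := by
          refine Finset.sum_congr rfl fun i _ => ?_
          rw [Finset.sum_smul]
          refine Finset.sum_congr rfl fun k hk => ?_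
          rw [← hidx k, (Finset.mem_filter.1 hk).2]
      _ = ∑ k, w k • z k := Finset.sum_fiberwise _ _ _
      _ = v := hzw


theorem tverberg_three (d : ℕ) (p : Fin (2 * d + 3) → Fin d → ℝ) :
    ∃ A₁ A₂ A₃ : Finset (Fin (2 * d + 3)),
      Disjoint A₁ A₂ ∧ Disjoint A₁ A₃ ∧ Disjoint A₂ A₃ ∧
      A₁ ∪ A₂ ∪ A₃ = Finset.univ ∧
      ∃ x : Fin d → ℝ, x ∈ convexHull ℝ (p '' ↑A₁) ∧ x ∈ convexHull ℝ (p '' ↑A₂) ∧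
        x ∈ convexHull ℝ (p '' ↑A₃) := by
  classical
  -- the lifted points
  set P : Fin (2 * d + 3) → Fin (d + 1) → ℝ := fun i => Fin.snoc (p i) 1 with hP
  set u : Fin 3 → Fin 2 → ℝ := ![![1, 0], ![0, 1], ![-1, -1]] with hu
  set F : Fin (2 * d + 3) → Fin 3 → Fin (2 * d + 2) → ℝ := fun i r m =>
    if h : (m : ℕ) < d + 1 then u r 0 * P i ⟨m, h⟩
    else u r 1 * P i ⟨(m : ℕ) - (d + 1), by omega⟩ with hF
  set f : Fin (2 * d + 3) → Fin 3 → EuclideanSpace ℝ (Fin (2 * d + 2)) := fun i r =>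
    (WithLp.equiv 2 (Fin (2 * d + 2) → ℝ)).symm (F i r) with hf
  -- each class contains 0 in its convex hull
  have hf0 : ∀ i, (0 : EuclideanSpace ℝ (Fin (2 * d + 2))) ∈ convexHull ℝ (Set.range (f i)) := by
    intro i
    have hsum3 : f i 0 + f i 1 + f i 2 = 0 := by
      apply (WithLp.equiv 2 (Fin (2 * d + 2) → ℝ)).injective
      funext m
      simp only [hf, hF, hu, WithLp.equiv_apply, WithLp.equiv_symm_apply, WithLp.ofLp_toLp, WithLp.ofLp_add, WithLp.ofLp_zero, Equiv.apply_symm_apply,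
        Pi.add_apply, Pi.zero_apply]
      split_ifs <;> simp <;> ring
    have h := Finset.univ.centerMass_mem_convexHull (w := fun _ : Fin 3 => (1 : ℝ))
      (z := f i) (fun r _ => zero_le_one) (by norm_num)
      (fun r _ => Set.mem_range_self r)
    have hcm : (Finset.univ : Finset (Fin 3)).centerMass (fun _ => (1 : ℝ)) (f i) = 0 := by
      rw [Finset.centerMass]
      rw [Fin.sum_univ_three, Fin.sum_univ_three, one_smul, one_smul, one_smul, hsum3]
      simp
    rwa [hcm] at h
  -- colorful Caratheodory
  have hrank : finrank ℝ (EuclideanSpace ℝ (Fin (2 * d + 2))) < 2 * d + 3 := by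
    simp [finrank_euclideanSpace_fin]
  obtain ⟨c, hc⟩ := colorful_caratheodory hrank f hf0
  obtain ⟨lam, hlam0, hlam1, hlamsum⟩ := exists_weights _ hc
  -- pass to plain functions
  have hlin : ∑ i, lam i • F i (c i) = (0 : Fin (2 * d + 2) → ℝ) := by
    have h := congrArg (WithLp.linearEquiv 2 ℝ (Fin (2 * d + 2) → ℝ)) hlamsum
    rw [map_sum, map_zero] at h
    simpa [hf, WithLp.linearEquiv] using h
  have hcoord : ∀ m : Fin (2 * d + 2), ∑ i, lam i * F i (c i) m = 0 := by
    intro m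
    have h := congrFun hlin m
    rw [Finset.sum_apply] at h
    simpa using h
  -- fibers
  set A : Fin 3 → Finset (Fin (2 * d + 3)) := fun r => Finset.univ.filter (fun i => c i = r)
    with hA
  set W : Fin 3 → Fin (d + 1) → ℝ := fun r k => ∑ i ∈ A r, lam i * P i k with hW
  -- block identities
  have hfiber : ∀ v : Fin (2 * d + 3) → ℝ,
      ∑ i, lam i * v i = ∑ r : Fin 3, ∑ i ∈ A r, lam i * v i :=
    fun v => (Finset.sum_fiberwise Finset.univ c (fun i => lam i * v i)).symm
  -- block identities: for k in first block
  have hb0 : ∀ k : Fin (d + 1), ∑ r : Fin 3, u r 0 * W r k = 0 := by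
    intro k
    have hk2 : (k : ℕ) < 2 * d + 2 := by omega
    have h := hcoord ⟨(k : ℕ), hk2⟩
    have hFv : ∀ i, F i (c i) ⟨(k : ℕ), hk2⟩ = u (c i) 0 * P i k := by
      intro i
      simp only [hF]
      exact dif_pos k.isLt
    have h2 : ∑ i, lam i * (u (c i) 0 * P i k) = 0 := by
      rw [← h]; exact Finset.sum_congr rfl fun i _ => by rw [hFv i]
    rw [hfiber] at h2
    rw [← h2]
    refine Finset.sum_congr rfl fun r _ => ?_
    rw [hW, Finset.mul_sum]
    refine Finset.sum_congr rfl fun i hi => ?_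
    have hci : c i = r := (Finset.mem_filter.1 hi).2
    rw [hci]; ring
  have hb1 : ∀ k : Fin (d + 1), ∑ r : Fin 3, u r 1 * W r k = 0 := by
    intro k
    have hk2 : (k : ℕ) + (d + 1) < 2 * d + 2 := by omega
    have h := hcoord ⟨(k : ℕ) + (d + 1), hk2⟩
    have hFv : ∀ i, F i (c i) ⟨(k : ℕ) + (d + 1), hk2⟩ = u (c i) 1 * P i k := by
      intro i
      simp only [hF]
      rw [dif_neg (by simp; omega)]
      congr 1
      exact congrArg (P i) (Fin.ext (by simp))
    have h2 : ∑ i, lam i * (u (c i) 1 * P i k) = 0 := by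
      rw [← h]; exact Finset.sum_congr rfl fun i _ => by rw [hFv i]
    rw [hfiber] at h2
    rw [← h2]
    refine Finset.sum_congr rfl fun r _ => ?_
    rw [hW, Finset.mul_sum]
    refine Finset.sum_congr rfl fun i hi => ?_
    have hci : c i = r := (Finset.mem_filter.1 hi).2
    rw [hci]; ring
  have hW02 : ∀ k, W 0 k = W 2 k := by
    intro k
    have h := hb0 k
    rw [Fin.sum_univ_three] at h
    simp only [hu] at h
    norm_num at h
    change W 0 k + (-1 : ℝ) * W 2 k = 0 at h
    linarith
  have hW12 : ∀ k, W 1 k = W 2 k := by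
    intro k
    have h := hb1 k
    rw [Fin.sum_univ_three] at h
    simp only [hu] at h
    norm_num at h
    change W 1 k + (-1 : ℝ) * W 2 k = 0 at h
    linarith
  -- total masses
  have hsigma : ∀ r, ∑ i ∈ A r, lam i = W r (Fin.last d) := by
    intro r
    rw [hW]
    refine Finset.sum_congr rfl fun i _ => ?_
    rw [hP]
    simp [Fin.snoc_last]
  have htot : ∑ r : Fin 3, ∑ i ∈ A r, lam i = 1 := by
    rw [Finset.sum_fiberwise]; exact hlam1
  have hthird : ∀ r, ∑ i ∈ A r, lam i = 1 / 3 := by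
    have h0 := hsigma 0; have h1 := hsigma 1; have h2 := hsigma 2
    have e0 := hW02 (Fin.last d); have e1 := hW12 (Fin.last d)
    rw [Fin.sum_univ_three] at htot
    have hall : ∑ i ∈ A 0, lam i = 1 / 3 ∧ ∑ i ∈ A 1, lam i = 1 / 3 ∧
        ∑ i ∈ A 2, lam i = 1 / 3 := by
      refine ⟨?_, ?_, ?_⟩ <;> linarith
    intro r
    rcases (by decide : ∀ a : Fin 3, a = 0 ∨ a = 1 ∨ a = 2) r with h | h | h <;> rw [h] <;> tauto
  -- the common point
  set x : Fin d → ℝ := fun k => 3 * W 2 (Fin.castSucc k) with hx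
  have hmem : ∀ r, x ∈ convexHull ℝ (p '' ↑(A r)) := by
    intro r
    have hpos : (0 : ℝ) < ∑ i ∈ A r, lam i := by rw [hthird r]; norm_num
    have h := (A r).centerMass_mem_convexHull (w := lam) (z := p) (fun i _ => hlam0 i) hpos
      (fun i hi => Set.mem_image_of_mem p (Finset.mem_coe.2 hi))
    have hxc : (A r).centerMass lam p = x := by
      rw [Finset.centerMass, hthird r]
      funext k
      rw [Pi.smul_apply, Finset.sum_apply]
      simp only [Pi.smul_apply, smul_eq_mul]
      have hWr : ∑ i ∈ A r, lam i * p i k = W r (Fin.castSucc k) := by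
        rw [hW]
        refine Finset.sum_congr rfl fun i _ => ?_
        rw [hP]
        simp [Fin.snoc_castSucc]
      rw [hWr]
      have hWr2 : W r (Fin.castSucc k) = W 2 (Fin.castSucc k) := by
        fin_cases r
        · exact hW02 _
        · exact hW12 _
        · rfl
      rw [hWr2, hx]
      norm_num
    rwa [hxc] at h
  -- assemble
  refine ⟨A 0, A 1, A 2, ?_, ?_, ?_, ?_, x, hmem 0, hmem 1, hmem 2⟩
  · rw [Finset.disjoint_left]
    intro i hi0 hi1
    have h0 : c i = 0 := (Finset.mem_filter.1 hi0).2
    have h1 : c i = 1 := (Finset.mem_filter.1 hi1).2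
    rw [h0] at h1; exact absurd h1 (by decide)
  · rw [Finset.disjoint_left]
    intro i hi0 hi1
    have h0 : c i = 0 := (Finset.mem_filter.1 hi0).2
    have h1 : c i = 2 := (Finset.mem_filter.1 hi1).2
    rw [h0] at h1; exact absurd h1 (by decide)
  · rw [Finset.disjoint_left]
    intro i hi0 hi1
    have h0 : c i = 1 := (Finset.mem_filter.1 hi0).2
    have h1 : c i = 2 := (Finset.mem_filter.1 hi1).2
    rw [h0] at h1; exact absurd h1 (by decide)
  · ext i
    simp only [Finset.mem_union, Finset.mem_univ, iff_true, hA, Finset.mem_filter, true_and]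
    have : c i = 0 ∨ c i = 1 ∨ c i = 2 := by
      rcases (by decide : ∀ a : Fin 3, a = 0 ∨ a = 1 ∨ a = 2) (c i) with h | h | h <;> tauto
    tauto
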